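/- The matrix A(n) = n¹A¹ + n²A², with A¹, A² as in the 2D scalar relaxation system with parameters c = (c¹,c²), d = (d¹,d²), has real eigenvalues λ² = ½(c·n + d·n) and λ^{1,3} = ½(c·n + d·n) ∓ ½√((n¹d¹ − n¹c¹)² + (n²d² − n²c²)²); in particular the characteristic polynomial of A(n) factors as (λ − λ¹)(λ − λ²)(λ − λ³) with all roots real. -/
import Mathlib

open Polynomial

lemma cube_factor (m t : ℝ) :
    (X - C (m - t)) * (X - C m) * (X - C (m + t))
      = X ^ 3 - C (3 * m) * X ^ 2 + C (3 * m ^ 2 - t ^ 2) * X - C (m ^ 3 - m * t ^ 2) := by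
  simp only [map_sub, map_add, map_mul, map_pow, map_ofNat]
  ring

set_option maxHeartbeats 1600000 in
theorem relax_charpoly (c d n : ℝ × ℝ) :
    let A1 : Matrix (Fin 3) (Fin 3) ℝ :=
      !![0, 1, 0;
         -(c.1 * d.1), c.1 + d.1, 0;
         -(c.2 * d.1) - (1/4) * (c.1 - d.1) * (c.2 - d.2), (1/2) * (c.2 + d.2), (1/2) * (c.1 + d.1)]
    let A2 : Matrix (Fin 3) (Fin 3) ℝ :=
      !![0, 0, 1;
         -(c.1 * d.2) - (1/4) * (c.1 - d.1) * (c.2 - d.2), (1/2) * (c.2 + d.2), (1/2) * (c.1 + d.1);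
         -(c.2 * d.2), 0, c.2 + d.2]
    let cn := c.1 * n.1 + c.2 * n.2
    let dn := d.1 * n.1 + d.2 * n.2
    let r := Real.sqrt ((n.1 * d.1 - n.1 * c.1) ^ 2 + (n.2 * d.2 - n.2 * c.2) ^ 2)
    Matrix.charpoly (n.1 • A1 + n.2 • A2)
      = (Polynomial.X - Polynomial.C ((1/2) * (cn + dn) - (1/2) * r)) *
        (Polynomial.X - Polynomial.C ((1/2) * (cn + dn))) *
        (Polynomial.X - Polynomial.C ((1/2) * (cn + dn) + (1/2) * r)) := by
  intro A1 A2 cn dn r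
  have hr : r ^ 2 = (n.1 * d.1 - n.1 * c.1) ^ 2 + (n.2 * d.2 - n.2 * c.2) ^ 2 :=
    Real.sq_sqrt (by positivity)
  rw [cube_factor ((1/2) * (cn + dn)) ((1/2) * r)]
  rw [Matrix.charpoly, Matrix.det_fin_three]
  simp only [A1, A2, cn, dn, Matrix.charmatrix_apply, Matrix.one_fin_three, Matrix.add_apply, Matrix.smul_apply,
    Matrix.one_apply, Matrix.cons_val', Matrix.cons_val_zero, Matrix.cons_val_one,
    Matrix.head_cons, Matrix.head_fin_const, Matrix.cons_val_fin_one, Matrix.empty_val',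
    Matrix.cons_val_two, Matrix.tail_cons, Matrix.of_apply, Matrix.map_apply,
    Fin.isValue, ite_true, ite_false, smul_eq_mul, Matrix.diagonal_apply]
  simp only [Fin.reduceEq, reduceIte]
  apply Polynomial.funext
  intro x
  simp only [Polynomial.eval_add, Polynomial.eval_sub, Polynomial.eval_mul,
    Polynomial.eval_pow, Polynomial.eval_neg, Polynomial.eval_C, Polynomial.eval_X,
    Polynomial.eval_ofNat, Polynomial.eval_one, Polynomial.eval_zero]
  linear_combination ((x - (1/2) * (cn + dn)) / 4) * hr
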